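/- Let ℒ be the Gremban Laplacian of a signed graph G, and let ψ ∈ ℝ^{2n} be any vector with no zero entries. Define 𝒰₁ = {v : ψ(v) > 0} and 𝒰₂ = {v : ψ(v) < 0} in V(𝒢). If ψ is symmetric under the Gremban involution (ψ(η(v)) = ψ(v) for all v), then the cut-set C(𝒰₁, 𝒰₂) is Gremban-symmetric and its projection to G is a cut-set of G; if ψ is antisymmetric (ψ(η(v)) = −ψ(v)), then C(𝒰₁, 𝒰₂) is Gremban-symmetric and its projection to G is a frustration set of G. -/

import Mathlib

/-- A signed graph: a simple graph together with a symmetric `±1`-valued sign function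
on its edges. -/
structure SignedGraph (V : Type*) where
  G : SimpleGraph V
  sign : V → V → ℤ
  sign_symm : ∀ u v, sign u v = sign v u
  sign_pm : ∀ u v, G.Adj u v → sign u v = 1 ∨ sign u v = -1

namespace SignedGraph

variable {V : Type*} (S : SignedGraph V)

/-- The Gremban expansion of a signed graph: each vertex `v` is doubled into the two
polarities `(v, true)` (positive) and `(v, false)` (negative); a positive edge lifts to
two edges between equal polarities, and a negative edge to two edges between opposite
polarities. -/
def gremban : SimpleGraph (V × Bool) where
  Adj x y := S.G.Adj x.1 y.1 ∧ ((x.2 = y.2) ↔ S.sign x.1 y.1 = 1)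
  symm := by
    constructor
    rintro ⟨u, a⟩ ⟨v, b⟩ ⟨h, hs⟩
    refine ⟨h.symm, ?_⟩
    rw [S.sign_symm v u, eq_comm]
    exact hs
  loopless := by
    constructor
    rintro ⟨u, a⟩ ⟨h, _⟩
    exact S.G.loopless.irrefl u h

/-- The Gremban involution, swapping the two polarities of every vertex. -/
def eta : V × Bool → V × Bool := fun x => (x.1, !x.2)

end SignedGraph

open SignedGraph

/-- The set of edges of `G` with one endpoint in `A` and the other in `B`. -/
def cutEdges {V : Type*} (G : SimpleGraph V) (A B : Set V) : Set (Sym2 V) :=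
  {e | e ∈ G.edgeSet ∧ ∃ u v, e = s(u, v) ∧ u ∈ A ∧ v ∈ B}

/-- The edge connectivity of a graph: the minimum size of a cut-set over all
bipartitions of the vertex set into two nonempty parts. -/
noncomputable def edgeConn {V : Type*} (G : SimpleGraph V) : ℕ :=
  sInf {n | ∃ A : Set V, A.Nonempty ∧ Aᶜ.Nonempty ∧ (cutEdges G A Aᶜ).ncard = n}

/-- The frustration set of a switching function `θ`: the edges that are negative after
switching by `θ`. -/
def frustEdges {V : Type*} (S : SignedGraph V) (θ : V → ℤ) : Set (Sym2 V) :=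
  {e | e ∈ S.G.edgeSet ∧ ∃ u v, e = s(u, v) ∧ θ u * θ v * S.sign u v = -1}

/-- The frustration index of a signed graph: the minimum size of a frustration set over
all switching functions `θ : V → {±1}`. -/
noncomputable def frustIndex {V : Type*} (S : SignedGraph V) : ℕ :=
  sInf {n | ∃ θ : V → ℤ, (∀ v, θ v = 1 ∨ θ v = -1) ∧ (frustEdges S θ).ncard = n}



section Aux

variable {V : Type*}

private lemma eta_eta (x : V × Bool) : eta (eta x) = x := by
  cases x with
  | mk u a => simp [SignedGraph.eta]

private lemma map_eta_eta (e : Sym2 (V × Bool)) :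
    Sym2.map eta (Sym2.map eta e) = e := by
  induction e using Sym2.ind with
  | _ x y => simp [Sym2.map_pair_eq, eta_eta]

private lemma mem_es {W : Type*} {G : SimpleGraph W} {a b : W} :
    s(a, b) ∈ G.edgeSet ↔ G.Adj a b := SimpleGraph.mem_edgeSet G

private lemma gremban_adj_eta {S : SignedGraph V} {x y : V × Bool}
    (h : S.gremban.Adj x y) : S.gremban.Adj (eta x) (eta y) := by
  obtain ⟨h1, h2⟩ := h
  refine ⟨h1, ?_⟩
  simp only [SignedGraph.eta]
  cases hx2 : x.2 <;> cases hy2 : y.2 <;> simp_all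

end Aux

/-- Let `ψ` be a vector on the vertices of the Gremban expansion with no zero entries,
and let `𝒰₁, 𝒰₂` be the sets where `ψ` is positive, resp. negative.  If `ψ` is symmetric
under the Gremban involution, then the cut-set `C(𝒰₁,𝒰₂)` is Gremban-symmetric and its
projection to `G` is a cut-set; if `ψ` is antisymmetric, then `C(𝒰₁,𝒰₂)` is
Gremban-symmetric and its projection is a frustration set of `G`. -/
theorem fiedler_cut_projection {V : Type*} (S : SignedGraph V)
    (ψ : V × Bool → ℝ) (hψ : ∀ x, ψ x ≠ 0) :
    ((∀ x, ψ (eta x) = ψ x) →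
      Sym2.map eta '' cutEdges S.gremban {x | 0 < ψ x} {x | ψ x < 0} =
          cutEdges S.gremban {x | 0 < ψ x} {x | ψ x < 0} ∧
      ∃ A : Set V,
        Sym2.map Prod.fst '' cutEdges S.gremban {x | 0 < ψ x} {x | ψ x < 0} =
          cutEdges S.G A Aᶜ) ∧
    ((∀ x, ψ (eta x) = -ψ x) →
      Sym2.map eta '' cutEdges S.gremban {x | 0 < ψ x} {x | ψ x < 0} =
          cutEdges S.gremban {x | 0 < ψ x} {x | ψ x < 0} ∧
      ∃ θ : V → ℤ, (∀ v, θ v = 1 ∨ θ v = -1) ∧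
        Sym2.map Prod.fst '' cutEdges S.gremban {x | 0 < ψ x} {x | ψ x < 0} =
          frustEdges S θ) := by
  classical
  set C : Set (Sym2 (V × Bool)) :=
    cutEdges S.gremban {x | 0 < ψ x} {x | ψ x < 0} with hC
  have hneg : ∀ x : V × Bool, ¬ 0 < ψ x → ψ x < 0 := by
    intro x hx
    exact lt_of_le_of_ne (not_lt.mp hx) (hψ x)
  have hsymmC : (∀ e ∈ C, Sym2.map eta e ∈ C) → Sym2.map eta '' C = C := by
    intro hcl
    apply Set.Subset.antisymm
    · rintro _ ⟨e, he, rfl⟩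
      exact hcl e he
    · intro e he
      exact ⟨Sym2.map eta e, hcl e he, map_eta_eta e⟩
  constructor
  · -- symmetric case
    intro hsym
    have hconst : ∀ (u : V) (a : Bool), ψ (u, a) = ψ (u, true) := by
      intro u a
      cases a with
      | true => rfl
      | false => simpa [SignedGraph.eta] using hsym (u, true)
    constructor
    · apply hsymmC
      rintro e ⟨hE, x, y, rfl, hx, hy⟩
      simp only [Set.mem_setOf_eq] at hx hy
      rw [Sym2.map_pair_eq]
      refine ⟨mem_es.mpr (gremban_adj_eta (mem_es.mp hE)), eta x, eta y, rfl, ?_, ?_⟩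
      · show 0 < ψ (eta x); rw [hsym]; exact hx
      · show ψ (eta y) < 0; rw [hsym]; exact hy
    · refine ⟨{u | 0 < ψ (u, true)}, ?_⟩
      apply Set.Subset.antisymm
      · rintro _ ⟨e, ⟨hE, x, y, rfl, hx, hy⟩, rfl⟩
        simp only [Set.mem_setOf_eq] at hx hy
        rw [Sym2.map_pair_eq]
        have hadj := mem_es.mp hE
        refine ⟨mem_es.mpr hadj.1, x.1, y.1, rfl, ?_, ?_⟩
        · show 0 < ψ (x.1, true)
          rw [← hconst x.1 x.2]; exact hx
        · show ¬ 0 < ψ (y.1, true)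
          rw [← hconst y.1 y.2]; exact not_lt.mpr hy.le
      · rintro e ⟨hE, u, v, rfl, hu, hv⟩
        have hadj : S.G.Adj u v := mem_es.mp hE
        have hu' : 0 < ψ (u, true) := hu
        have hv' : ψ (v, true) < 0 := hneg _ hv
        rcases S.sign_pm u v hadj with hs | hs
        · refine ⟨s((u, true), (v, true)),
            ⟨mem_es.mpr ⟨hadj, by simp [hs]⟩, (u, true), (v, true), rfl, hu', hv'⟩,
            by rw [Sym2.map_pair_eq]⟩
        · refine ⟨s((u, true), (v, false)),
            ⟨mem_es.mpr ⟨hadj, by simp [hs]⟩, (u, true), (v, false), rfl, hu', ?_⟩,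
            by rw [Sym2.map_pair_eq]⟩
          show ψ (v, false) < 0
          rw [hconst]; exact hv'
  · -- antisymmetric case
    intro hanti
    have hflip : ∀ u : V, ψ (u, false) = -ψ (u, true) := by
      intro u
      simpa [SignedGraph.eta] using hanti (u, true)
    constructor
    · apply hsymmC
      rintro e ⟨hE, x, y, rfl, hx, hy⟩
      simp only [Set.mem_setOf_eq] at hx hy
      rw [Sym2.map_pair_eq, Sym2.eq_swap]
      refine ⟨?_, eta y, eta x, rfl, ?_, ?_⟩
      · rw [mem_es]
        exact (gremban_adj_eta (mem_es.mp hE)).symm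
      · show 0 < ψ (eta y); rw [hanti]; linarith
      · show ψ (eta x) < 0; rw [hanti]; linarith
    · refine ⟨fun u => if 0 < ψ (u, true) then 1 else -1, fun u => ?_, ?_⟩
      · by_cases h : 0 < ψ (u, true) <;> simp [h]
      · apply Set.Subset.antisymm
        · rintro _ ⟨e, ⟨hE, x, y, rfl, hx, hy⟩, rfl⟩
          simp only [Set.mem_setOf_eq] at hx hy
          rw [Sym2.map_pair_eq]
          obtain ⟨u, a⟩ := x
          obtain ⟨v, b⟩ := y
          obtain ⟨hadj, hiff⟩ := mem_es.mp hE
          refine ⟨mem_es.mpr hadj, u, v, rfl, ?_⟩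
          beta_reduce
          have hsgn := S.sign_pm u v hadj
          have h1 := hflip u
          have h2 := hflip v
          simp only at hiff
          cases a <;> cases b
          · -- a = false, b = false : sign = 1, ψ(u,true)<0, ψ(v,true)>0
            have hs : S.sign u v = 1 := hiff.mp rfl
            rw [if_neg (not_lt.mpr (by linarith)), if_pos (by linarith), hs]
            ring
          · -- a = false, b = true : sign = -1
            have hs : S.sign u v = -1 := by
              rcases hsgn with h | h
              · exact absurd (hiff.mpr h) (by simp)
              · exact h
            rw [if_neg (not_lt.mpr (by linarith)), if_neg (not_lt.mpr hy.le), hs]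
            ring
          · -- a = true, b = false : sign = -1
            have hs : S.sign u v = -1 := by
              rcases hsgn with h | h
              · exact absurd (hiff.mpr h) (by simp)
              · exact h
            rw [if_pos hx, if_pos (by linarith), hs]
            ring
          · -- a = true, b = true : sign = 1
            have hs : S.sign u v = 1 := hiff.mp rfl
            rw [if_pos hx, if_neg (not_lt.mpr hy.le), hs]
            ring
        · rintro e ⟨hE, u, v, rfl, hfr⟩
          have hadj : S.G.Adj u v := mem_es.mp hE
          have h1 := hflip u
          have h2 := hflip v
          beta_reduce at hfr
          by_cases hu : 0 < ψ (u, true) <;> by_cases hv : 0 < ψ (v, true)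
          · -- θu = 1, θv = 1, so sign = -1 ; lift to ((u,true),(v,false))
            rw [if_pos hu, if_pos hv, one_mul, one_mul] at hfr
            refine ⟨s((u, true), (v, false)),
              ⟨mem_es.mpr ⟨hadj, by simp [hfr]⟩,
               (u, true), (v, false), rfl, hu, show ψ (v, false) < 0 by linarith⟩,
              by rw [Sym2.map_pair_eq]⟩
          · rw [if_pos hu, if_neg hv, one_mul] at hfr
            have hs : S.sign u v = 1 := by
              rcases S.sign_pm u v hadj with h | h
              · exact h
              · rw [h] at hfr; norm_num at hfr
            refine ⟨s((u, true), (v, true)),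
              ⟨mem_es.mpr ⟨hadj, by simp [hs]⟩,
               (u, true), (v, true), rfl, hu, hneg _ hv⟩,
              by rw [Sym2.map_pair_eq]⟩
          · rw [if_neg hu, if_pos hv] at hfr
            have hs : S.sign u v = 1 := by
              rcases S.sign_pm u v hadj with h | h
              · exact h
              · rw [h] at hfr; norm_num at hfr
            have hu' : ψ (u, true) < 0 := hneg _ hu
            refine ⟨s((u, false), (v, false)),
              ⟨mem_es.mpr ⟨hadj, by simp [hs]⟩,
               (u, false), (v, false), rfl,
               show 0 < ψ (u, false) by linarith,
               show ψ (v, false) < 0 by linarith⟩,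
              by rw [Sym2.map_pair_eq]⟩
          · rw [if_neg hu, if_neg hv] at hfr
            have hs : S.sign u v = -1 := by
              rcases S.sign_pm u v hadj with h | h
              · rw [h] at hfr; norm_num at hfr
              · exact h
            have hu' : ψ (u, true) < 0 := hneg _ hu
            refine ⟨s((u, false), (v, true)),
              ⟨mem_es.mpr ⟨hadj, by simp [hs]⟩,
               (u, false), (v, true), rfl,
               show 0 < ψ (u, false) by linarith,
               hneg _ hv⟩,
              by rw [Sym2.map_pair_eq]⟩
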